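/- Fix x_1 > 0 and n >= 0. Define x_* = 2^{n+1} x_1 and f(x) = |x - x_*| + x_*. Then f is convex and 1-Lipschitz on R, the gradient of f at any point x < x_* is -1, and for any points x_0 = 0 and x_1, ..., x_n with |x_k| <= 2^k x_1 for all k, we have min_{k <= n} (f(x_k) - f_*) >= 2^n x_1 = D/2 where D = |x_0 - x_*| = 2^{n+1} x_1 and f_* = min f = x_*. -/

import Mathlib

theorem lower_bound_construction (n : ℕ) (x₁ : ℝ) (hx₁ : 0 < x₁)
    (x : ℕ → ℝ) (hx0 : x 0 = 0) (hx1 : x 1 = x₁)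
    (hb : ∀ k ≤ n, |x k| ≤ 2 ^ k * x₁) :
    ConvexOn ℝ Set.univ (fun y : ℝ => |y - 2 ^ (n + 1) * x₁| + 2 ^ (n + 1) * x₁) ∧
    LipschitzWith 1 (fun y : ℝ => |y - 2 ^ (n + 1) * x₁| + 2 ^ (n + 1) * x₁) ∧
    (∀ y : ℝ, y < 2 ^ (n + 1) * x₁ →
      deriv (fun y : ℝ => |y - 2 ^ (n + 1) * x₁| + 2 ^ (n + 1) * x₁) y = -1) ∧
    (∀ y : ℝ, 2 ^ (n + 1) * x₁ ≤ |y - 2 ^ (n + 1) * x₁| + 2 ^ (n + 1) * x₁) ∧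
    (∀ k ≤ n, (|x k - 2 ^ (n + 1) * x₁| + 2 ^ (n + 1) * x₁) - 2 ^ (n + 1) * x₁ ≥
      2 ^ n * x₁) ∧
    (2 : ℝ) ^ n * x₁ = |x 0 - 2 ^ (n + 1) * x₁| / 2 := by
  set c : ℝ := 2 ^ (n + 1) * x₁ with hc
  have hcpos : 0 < c := by positivity
  refine ⟨?_, ?_, ?_, ?_, ?_, ?_⟩
  · have h1 : ConvexOn ℝ Set.univ (fun y : ℝ => |y - c|) := by
      simpa [Real.dist_eq] using convexOn_univ_dist (E := ℝ) c
    have h2 : ConvexOn ℝ Set.univ (fun _ : ℝ => c) := convexOn_const _ convex_univ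
    exact h1.add h2
  · have h1 : LipschitzWith 1 (fun y : ℝ => |y - c|) := by
      have : LipschitzWith 1 (fun y : ℝ => dist y c) := LipschitzWith.dist_left c
      simpa [Real.dist_eq] using this
    have : LipschitzWith 1 (fun y : ℝ => |y - c| + c) := by
      intro a b
      simpa using h1 a b
    exact this
  · intro y hy
    have hev : (fun y : ℝ => |y - c| + c) =ᶠ[nhds y] (fun y : ℝ => 2 * c - y) := by
      filter_upwards [Iio_mem_nhds hy] with z hz
      have : z - c < 0 := sub_neg.mpr hz
      rw [abs_of_neg this]; ring
    rw [hev.deriv_eq]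
    have : deriv (fun y : ℝ => 2 * c - y) y = 0 - 1 := by
      apply HasDerivAt.deriv
      exact (hasDerivAt_const y (2 * c)).sub (hasDerivAt_id y)
    simpa using this
  · intro y
    have := abs_nonneg (y - c)
    linarith
  · intro k hk
    have h1 : |x k| ≤ 2 ^ k * x₁ := hb k hk
    have h2 : (2 : ℝ) ^ k * x₁ ≤ 2 ^ n * x₁ := by
      apply mul_le_mul_of_nonneg_right _ hx₁.le
      exact pow_le_pow_right₀ (by norm_num) hk
    have h3 : x k ≤ 2 ^ n * x₁ := le_trans (le_abs_self _) (h1.trans h2)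
    have h4 : c - x k ≤ |x k - c| := by
      rw [abs_sub_comm]; exact le_abs_self _
    have h5 : c = 2 * (2 ^ n * x₁) := by rw [hc, pow_succ]; ring
    linarith
  · rw [hx0]
    have : |0 - c| = c := by rw [zero_sub, abs_neg, abs_of_pos hcpos]
    rw [this, hc, pow_succ]; ring
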